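/- arXiv:2303.11940 — 5 statements merged into one kernel-verified Lean document; each statement's English description precedes it below -/
import Mathlib

section
/- A point z = (z₁, z₂, z₃, z₄) ∈ ℂ⁴ lies in the Lie ball L₄ if and only if the matrix A = [[z₁ + i z₂, z₃ + i z₄],[z₃ − i z₄, −z₁ + i z₂]] satisfies I₂ − A A* positive definite (equivalently, the operator norm of A is less than 1). -/
open Complex Matrix
open scoped ComplexOrder
open scoped ComplexConjugate

lemma sylvester2 (α δ : ℝ) (β : ℂ) :
    (!![(α:ℂ), β; conj β, (δ:ℂ)] : Matrix (Fin 2) (Fin 2) ℂ).PosDef ↔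
      0 < α ∧ Complex.normSq β < α * δ := by
  rw [Matrix.posDef_iff_dotProduct_mulVec]
  constructor
  · rintro ⟨hherm, hpos⟩
    have h1 : 0 < α := by
      have h1 := hpos (x := ![1, 0]) (by simp [funext_iff, Fin.forall_fin_two])
      rw [Complex.lt_def] at h1
      simpa [dotProduct, mulVec, Fin.sum_univ_two] using h1.1
    refine ⟨h1, ?_⟩
    have h2 := hpos (x := ![-β, (α:ℂ)]) (by
      simp [funext_iff, Fin.forall_fin_two]
      intro _; exact_mod_cast h1.ne')
    simp only [dotProduct, mulVec, Fin.sum_univ_two, Matrix.cons_val', Matrix.cons_val_zero,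
      Matrix.cons_val_one, Matrix.head_cons, Matrix.empty_val', Matrix.cons_val_fin_one,
      Matrix.head_fin_const, Pi.star_apply, star_neg, RCLike.star_def, Matrix.of_apply] at h2
    have hval : (starRingEnd ℂ) (-β) * ((α:ℂ) * -β + β * ↑α) +
        (starRingEnd ℂ) ↑α * ((starRingEnd ℂ) β * -β + (δ:ℂ) * ↑α)
        = ((α * (α * δ - Complex.normSq β) : ℝ) : ℂ) := by
      rw [map_neg, Complex.conj_ofReal]
      push_cast
      rw [← Complex.mul_conj]
      ring
    rw [hval] at h2
    have := Complex.real_lt_real (x := 0) (y := α * (α * δ - Complex.normSq β)) |>.mp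
      (by exact_mod_cast h2)
    nlinarith
  · rintro ⟨h1, h2⟩
    constructor
    · ext i j
      fin_cases i <;> fin_cases j <;>
        simp [Matrix.conjTranspose_apply, Complex.conj_ofReal]
    · intro x hx
      simp only [dotProduct, mulVec, Fin.sum_univ_two, Matrix.cons_val', Matrix.cons_val_zero,
        Matrix.cons_val_one, Matrix.head_cons, Matrix.empty_val', Matrix.cons_val_fin_one,
        Matrix.head_fin_const, Pi.star_apply, RCLike.star_def, Matrix.of_apply]
      set Q : ℂ := (starRingEnd ℂ) (x 0) * ((α:ℂ) * x 0 + β * x 1) +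
        (starRingEnd ℂ) (x 1) * ((starRingEnd ℂ) β * x 0 + (δ:ℂ) * x 1) with hQ
      have key : (α:ℂ) * Q =
          ((Complex.normSq ((α:ℂ) * x 0 + β * x 1) +
            (α * δ - Complex.normSq β) * Complex.normSq (x 1) : ℝ) : ℂ) := by
        push_cast
        rw [← Complex.mul_conj, ← Complex.mul_conj, ← Complex.mul_conj]
        simp only [map_add, _root_.map_mul, Complex.conj_ofReal, hQ]
        ring
      have hQr : Q = (((Complex.normSq ((α:ℂ) * x 0 + β * x 1) +
            (α * δ - Complex.normSq β) * Complex.normSq (x 1)) / α : ℝ) : ℂ) := by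
        have hα : (α:ℂ) ≠ 0 := by exact_mod_cast h1.ne'
        push_cast at key ⊢
        rw [eq_div_iff hα]
        linear_combination key
      rw [hQr]
      have hpos : 0 < (Complex.normSq ((α:ℂ) * x 0 + β * x 1) +
            (α * δ - Complex.normSq β) * Complex.normSq (x 1)) / α := by
        apply div_pos _ h1
        rcases eq_or_ne (x 1) 0 with h | h
        · have hx0 : x 0 ≠ 0 := by
            intro h0; apply hx; funext i; fin_cases i <;> simp [h0, h]
          have hne : (α:ℂ) * x 0 + β * x 1 ≠ 0 := by
            simp [h]
            exact ⟨by exact_mod_cast h1.ne', hx0⟩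
          have := Complex.normSq_pos.mpr hne
          nlinarith [Complex.normSq_nonneg (x 1)]
        · have := Complex.normSq_pos.mpr h
          nlinarith [Complex.normSq_nonneg ((α:ℂ) * x 0 + β * x 1)]
      exact_mod_cast Complex.real_lt_real.mpr hpos

lemma mataux (a b c d : ℂ) :
    (1 : Matrix (Fin 2) (Fin 2) ℂ) - !![a, b; c, d] * !![a, b; c, d]ᴴ =
    !![((1 - (Complex.normSq a + Complex.normSq b) : ℝ) : ℂ),
        -(a * conj c + b * conj d);
       conj (-(a * conj c + b * conj d)),
        ((1 - (Complex.normSq c + Complex.normSq d) : ℝ) : ℂ)] := by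
  have hAH : !![a, b; c, d]ᴴ = !![conj a, conj c; conj b, conj d] := by
    ext i j; fin_cases i <;> fin_cases j <;> simp [Matrix.conjTranspose_apply]
  rw [hAH, Matrix.mul_fin_two, Matrix.one_fin_two]
  ext i j
  fin_cases i <;> fin_cases j
  all_goals
    simp only [Fin.isValue, Fin.zero_eta, Fin.mk_one, Matrix.sub_apply, Matrix.of_apply,
      Matrix.cons_val_zero, Matrix.cons_val_one, Matrix.head_cons, Complex.ofReal_sub,
      Complex.ofReal_add, Complex.ofReal_one, ← Complex.mul_conj, map_add, map_neg,
      _root_.map_mul, Complex.conj_conj]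
  all_goals ring

lemma lagaux (a b c d : ℂ) :
    (Complex.normSq a + Complex.normSq b) * (Complex.normSq c + Complex.normSq d) =
      Complex.normSq (a * conj c + b * conj d) + Complex.normSq (a * d - b * c) := by
  have : (((Complex.normSq a + Complex.normSq b) *
      (Complex.normSq c + Complex.normSq d) : ℝ) : ℂ) =
      ((Complex.normSq (a * conj c + b * conj d) + Complex.normSq (a * d - b * c) : ℝ) : ℂ) := by
    push_cast [← Complex.mul_conj]
    simp only [map_add, map_sub, _root_.map_mul, Complex.conj_conj]
    ring
  exact_mod_cast this

lemma sumaux (z₁ z₂ z₃ z₄ : ℂ) :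
    (Complex.normSq (z₁ + I * z₂) + Complex.normSq (z₃ + I * z₄)) +
      (Complex.normSq (z₃ - I * z₄) + Complex.normSq (-z₁ + I * z₂)) =
    2 * (Complex.normSq z₁ + Complex.normSq z₂ + Complex.normSq z₃ + Complex.normSq z₄) := by
  have : (((Complex.normSq (z₁ + I * z₂) + Complex.normSq (z₃ + I * z₄)) +
      (Complex.normSq (z₃ - I * z₄) + Complex.normSq (-z₁ + I * z₂)) : ℝ) : ℂ) =
      ((2 * (Complex.normSq z₁ + Complex.normSq z₂ + Complex.normSq z₃ +
        Complex.normSq z₄) : ℝ) : ℂ) := by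
    push_cast [← Complex.mul_conj]
    simp only [map_add, map_sub, map_neg, _root_.map_mul, Complex.conj_conj, Complex.conj_I]
    ring_nf
    simp only [Complex.I_sq]
    ring
  exact_mod_cast this

lemma detaux (z₁ z₂ z₃ z₄ : ℂ) :
    (z₁ + I * z₂) * (-z₁ + I * z₂) - (z₃ + I * z₄) * (z₃ - I * z₄) =
      -(z₁ ^ 2 + z₂ ^ 2 + z₃ ^ 2 + z₄ ^ 2) := by
  ring_nf
  simp only [Complex.I_sq]
  ring

/-- `(z₁,z₂,z₃,z₄)` lies in the Lie ball `L₄` iff the matrix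
`[[z₁+iz₂, z₃+iz₄],[z₃−iz₄, −z₁+iz₂]]` satisfies `I₂ − A Aᴴ` positive definite. -/
theorem stmt_3 (z₁ z₂ z₃ z₄ : ℂ) :
    (Real.sqrt (‖z₁‖ ^ 2 + ‖z₂‖ ^ 2 +
        ‖z₃‖ ^ 2 + ‖z₄‖ ^ 2) < 1 ∧
      2 * (‖z₁‖ ^ 2 + ‖z₂‖ ^ 2 +
        ‖z₃‖ ^ 2 + ‖z₄‖ ^ 2) <
        1 + ‖z₁ ^ 2 + z₂ ^ 2 + z₃ ^ 2 + z₄ ^ 2‖ ^ 2) ↔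
    (1 - !![z₁ + I * z₂, z₃ + I * z₄; z₃ - I * z₄, -z₁ + I * z₂] *
        !![z₁ + I * z₂, z₃ + I * z₄; z₃ - I * z₄, -z₁ + I * z₂]ᴴ).PosDef := by
  rw [mataux, sylvester2, Real.sqrt_lt' one_pos, one_pow]
  simp only [Complex.sq_norm, Complex.normSq_neg]
  set S : ℝ := Complex.normSq z₁ + Complex.normSq z₂ + Complex.normSq z₃ + Complex.normSq z₄
    with hS
  set P : ℝ := Complex.normSq (z₁ ^ 2 + z₂ ^ 2 + z₃ ^ 2 + z₄ ^ 2) with hP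
  set u : ℝ := Complex.normSq (z₁ + I * z₂) + Complex.normSq (z₃ + I * z₄) with hu
  set v : ℝ := Complex.normSq (z₃ - I * z₄) + Complex.normSq (-z₁ + I * z₂) with hv
  set B : ℝ := Complex.normSq ((z₁ + I * z₂) * conj (z₃ - I * z₄) +
    (z₃ + I * z₄) * conj (-z₁ + I * z₂)) with hB
  have hsum : u + v = 2 * S := sumaux z₁ z₂ z₃ z₄
  have hlag : u * v = B + P := by
    rw [hu, hv, hB, hP, lagaux, detaux, Complex.normSq_neg]
  have hBnn : 0 ≤ B := Complex.normSq_nonneg _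
  have hPnn : 0 ≤ P := Complex.normSq_nonneg _
  have hvnn : 0 ≤ v := by
    rw [hv]; exact add_nonneg (Complex.normSq_nonneg _) (Complex.normSq_nonneg _)
  have hunn : 0 ≤ u := by
    rw [hu]; exact add_nonneg (Complex.normSq_nonneg _) (Complex.normSq_nonneg _)
  have hSnn : 0 ≤ S := by
    rw [hS]
    have := Complex.normSq_nonneg z₁
    have := Complex.normSq_nonneg z₂
    have := Complex.normSq_nonneg z₃
    have := Complex.normSq_nonneg z₄
    linarith
  clear_value S P u v B
  clear hS hP hu hv hB
  have hexp : (1 - u) * (1 - v) = 1 - 2 * S + B + P := by linear_combination hlag - hsum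
  constructor
  · rintro ⟨h1, h2⟩
    have hu1 : u < 1 := by
      by_contra hcon
      push_neg at hcon
      nlinarith [mul_nonneg (by linarith : (0:ℝ) ≤ u - 1) (by linarith : (0:ℝ) ≤ u - 2*S + 1)]
    exact ⟨by linarith, by linarith⟩
  · rintro ⟨h1, h2⟩
    have hu1 : u < 1 := by linarith
    have hdet : 0 < 1 - 2 * S + P := by linarith
    have hS1 : S < 1 := by
      by_contra hcon
      push_neg at hcon
      nlinarith [mul_pos (by linarith : (0:ℝ) < 1 - u) (by linarith : (0:ℝ) < 2*S - 1 - u)]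
    exact ⟨hS1, by linarith⟩
end

section
/- A point z = (z₁, z₂, z₃) ∈ ℂ³ lies in the Lie ball L₃ if and only if the symmetric matrix A = [[z₁ + i z₂, z₃],[z₃, −z₁ + i z₂]] satisfies I₂ − A A* positive definite. -/
open Complex Matrix
open scoped ComplexOrder

lemma posdef_fin_two {M : Matrix (Fin 2) (Fin 2) ℂ}
    (h10 : M 1 0 = (starRingEnd ℂ) (M 0 1)) (h00 : (M 0 0).im = 0) (h11 : (M 1 1).im = 0) :
    M.PosDef ↔ 0 < (M 0 0).re + (M 1 1).re ∧
      0 < (M 0 0).re * (M 1 1).re - Complex.normSq (M 0 1) := by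
  constructor
  · intro hM
    have ha := hM.dotProduct_mulVec_pos (x := ![1, 0]) (by simp [funext_iff, Fin.forall_fin_two])
    have hd := hM.dotProduct_mulVec_pos (x := ![0, 1]) (by simp [funext_iff, Fin.forall_fin_two])
    simp [dotProduct, Matrix.mulVec, Fin.sum_univ_two, Complex.lt_def] at ha hd
    have hdet := hM.det_pos
    rw [Matrix.det_fin_two, h10, Complex.lt_def] at hdet
    constructor
    · linarith [ha.1, hd.1]
    · have key : (M 0 0 * M 1 1 - M 0 1 * (starRingEnd ℂ) (M 0 1)).re
          = (M 0 0).re * (M 1 1).re - Complex.normSq (M 0 1) := by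
        simp only [Complex.sub_re, Complex.mul_re, Complex.normSq_apply, Complex.conj_re,
          Complex.conj_im, h00, h11]
        ring
      have h2 := hdet.1
      rw [key] at h2
      simpa using h2
  · rintro ⟨hsum, hdet⟩
    set a := (M 0 0).re with ha_def
    set d := (M 1 1).re with hd_def
    have hb : 0 ≤ Complex.normSq (M 0 1) := Complex.normSq_nonneg _
    have ha : 0 < a := by nlinarith
    have hd : 0 < d := by nlinarith
    rw [posDef_iff_dotProduct_mulVec]
    constructor
    · ext i j
      fin_cases i <;> fin_cases j <;>
        simp [Matrix.conjTranspose_apply, h10, Complex.ext_iff, h00, h11]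
    · intro x hx
      have hx' : 0 < Complex.normSq (x 0) + Complex.normSq (x 1) := by
        have hor : x 0 ≠ 0 ∨ x 1 ≠ 0 := by
          by_contra h
          push_neg at h
          exact hx (funext fun i => by fin_cases i <;> simp [h.1, h.2])
        rcases hor with h | h
        · have := Complex.normSq_pos.2 h
          nlinarith [Complex.normSq_nonneg (x 1)]
        · have := Complex.normSq_pos.2 h
          nlinarith [Complex.normSq_nonneg (x 0)]
      rw [Complex.lt_def]
      constructor
      · simp only [dotProduct, Matrix.mulVec, Fin.sum_univ_two, Pi.star_apply,
          Complex.zero_re, Complex.add_re, Complex.mul_re, Complex.add_im, Complex.mul_im,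
          RCLike.star_def, Complex.conj_re, Complex.conj_im, h10]
        simp only [Complex.normSq_apply] at hdet hx'
        set x0r := (x 0).re; set x0i := (x 0).im
        set x1r := (x 1).re; set x1i := (x 1).im
        set br := (M 0 1).re; set bi := (M 0 1).im
        rcases eq_or_lt_of_le (by positivity : (0:ℝ) ≤ x1r ^ 2 + x1i ^ 2) with h1 | h1
        · have h1r : x1r = 0 := by nlinarith [sq_nonneg x1r, sq_nonneg x1i]
          have h1i : x1i = 0 := by nlinarith [sq_nonneg x1r, sq_nonneg x1i]
          rw [h1r, h1i] at hx' ⊢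
          nlinarith
        · nlinarith [sq_nonneg (a * x0r + br * x1r - bi * x1i),
            sq_nonneg (a * x0i + br * x1i + bi * x1r), mul_pos hdet h1,
            sq_nonneg x0r, sq_nonneg x0i]
      · simp only [dotProduct, Matrix.mulVec, Fin.sum_univ_two, Pi.star_apply,
          Complex.zero_im, Complex.add_im, Complex.mul_im, Complex.mul_re, Complex.add_re,
          RCLike.star_def, Complex.conj_re, Complex.conj_im, h10, h00, h11]
        ring


/-- `(z₁,z₂,z₃)` lies in the Lie ball `L₃` iff the symmetric matrix
`[[z₁+iz₂, z₃],[z₃, −z₁+iz₂]]` satisfies `I₂ − A Aᴴ` positive definite. -/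
theorem stmt_4 (z₁ z₂ z₃ : ℂ) :
    (Real.sqrt (‖z₁‖ ^ 2 + ‖z₂‖ ^ 2 + ‖z₃‖ ^ 2) < 1 ∧
      2 * (‖z₁‖ ^ 2 + ‖z₂‖ ^ 2 + ‖z₃‖ ^ 2) <
        1 + ‖z₁ ^ 2 + z₂ ^ 2 + z₃ ^ 2‖ ^ 2) ↔
    (1 - !![z₁ + I * z₂, z₃; z₃, -z₁ + I * z₂] *
        !![z₁ + I * z₂, z₃; z₃, -z₁ + I * z₂]ᴴ).PosDef := by
  set M := (1 - !![z₁ + I * z₂, z₃; z₃, -z₁ + I * z₂] *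
        !![z₁ + I * z₂, z₃; z₃, -z₁ + I * z₂]ᴴ) with hM
  have e00 : M 0 0 = 1 - ((z₁ + I * z₂) * (starRingEnd ℂ) (z₁ + I * z₂) + z₃ * (starRingEnd ℂ) z₃) := by
    simp [hM, Matrix.sub_apply, Matrix.mul_apply, Fin.sum_univ_two,
      Matrix.conjTranspose_apply, Matrix.one_apply, Matrix.vecMul, dotProduct]
  have e01 : M 0 1 = -((z₁ + I * z₂) * (starRingEnd ℂ) z₃ + z₃ * (starRingEnd ℂ) (-z₁ + I * z₂)) := by
    simp [hM, Matrix.sub_apply, Matrix.mul_apply, Fin.sum_univ_two,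
      Matrix.conjTranspose_apply, Matrix.one_apply, Matrix.vecMul, dotProduct]
  have e10 : M 1 0 = -(z₃ * (starRingEnd ℂ) (z₁ + I * z₂) + (-z₁ + I * z₂) * (starRingEnd ℂ) z₃) := by
    simp [hM, Matrix.sub_apply, Matrix.mul_apply, Fin.sum_univ_two,
      Matrix.conjTranspose_apply, Matrix.one_apply, Matrix.vecMul, dotProduct]
  have e11 : M 1 1 = 1 - (z₃ * (starRingEnd ℂ) z₃ + (-z₁ + I * z₂) * (starRingEnd ℂ) (-z₁ + I * z₂)) := by
    simp [hM, Matrix.sub_apply, Matrix.mul_apply, Fin.sum_univ_two,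
      Matrix.conjTranspose_apply, Matrix.one_apply, Matrix.vecMul, dotProduct]
  have h10 : M 1 0 = (starRingEnd ℂ) (M 0 1) := by
    rw [e10, e01]
    simp [Complex.ext_iff]
    constructor <;> ring
  have h00 : (M 0 0).im = 0 := by
    rw [e00]; simp [Complex.ext_iff]; ring
  have h11 : (M 1 1).im = 0 := by
    rw [e11]; simp [Complex.ext_iff]; ring
  rw [posdef_fin_two h10 h00 h11]
  have E1 : (M 0 0).re + (M 1 1).re
      = 2 - 2 * (‖z₁‖ ^ 2 + ‖z₂‖ ^ 2 + ‖z₃‖ ^ 2) := by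
    rw [e00, e11]
    simp [Complex.sq_norm, Complex.normSq_apply, Complex.sub_re, Complex.add_re, Complex.mul_re]
    ring
  have E2 : (M 0 0).re * (M 1 1).re - Complex.normSq (M 0 1)
      = 1 - 2 * (‖z₁‖ ^ 2 + ‖z₂‖ ^ 2 + ‖z₃‖ ^ 2)
        + ‖z₁ ^ 2 + z₂ ^ 2 + z₃ ^ 2‖ ^ 2 := by
    rw [e00, e11, e01, show z₁ ^ 2 + z₂ ^ 2 + z₃ ^ 2 = z₁ * z₁ + z₂ * z₂ + z₃ * z₃ by ring]
    simp [Complex.sq_norm, Complex.normSq_apply, Complex.sub_re, Complex.add_re, Complex.mul_re,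
      Complex.mul_im, Complex.add_im, Complex.sub_im]
    ring
  rw [E1, E2, Real.sqrt_lt' one_pos]
  constructor <;> rintro ⟨h1, h2⟩ <;> constructor <;> nlinarith [norm_nonneg (z₁^2+z₂^2+z₃^2), sq_nonneg (‖z₁^2+z₂^2+z₃^2‖)]
end

section
/- The Lie ball Lₙ = {z ∈ ℂⁿ : ‖z‖ < 1 and 2‖z‖² < 1 + |z∙z|²} is a convex subset of ℂⁿ. -/
open Complex Finset

namespace LieBall

variable {n : ℕ}

noncomputable def Nz (z : Fin n → ℂ) : ℝ := ∑ j, ‖z j‖ ^ 2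
noncomputable def Qz (z : Fin n → ℂ) : ℝ := ‖∑ j, (z j) ^ 2‖
noncomputable def az (z : Fin n → ℂ) : ℝ := Real.sqrt ((Nz z + Qz z) / 2)
noncomputable def bz (z : Fin n → ℂ) : ℝ := Real.sqrt ((Nz z - Qz z) / 2)

lemma Nz_nonneg (z : Fin n → ℂ) : 0 ≤ Nz z :=
  Finset.sum_nonneg fun j _ => sq_nonneg _

lemma Qz_nonneg (z : Fin n → ℂ) : 0 ≤ Qz z := norm_nonneg _

lemma Qz_le_Nz (z : Fin n → ℂ) : Qz z ≤ Nz z := by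
  calc ‖∑ j, (z j) ^ 2‖ ≤ ∑ j, ‖(z j) ^ 2‖ :=
        norm_sum_le _ _
    _ = Nz z := by simp [Nz, map_pow]

lemma az_nonneg (z : Fin n → ℂ) : 0 ≤ az z := Real.sqrt_nonneg _
lemma bz_nonneg (z : Fin n → ℂ) : 0 ≤ bz z := Real.sqrt_nonneg _

lemma az_sq (z : Fin n → ℂ) : az z ^ 2 = (Nz z + Qz z) / 2 :=
  Real.sq_sqrt (by have := Qz_nonneg z; have := Nz_nonneg z; linarith)

lemma bz_sq (z : Fin n → ℂ) : bz z ^ 2 = (Nz z - Qz z) / 2 :=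
  Real.sq_sqrt (by have := Qz_le_Nz z; linarith)

/-- Rotate `z` so that `z∙z` becomes `|z∙z| ≥ 0`; then the real and imaginary
parts are orthogonal with squared norms `(N ± Q)/2`. -/
lemma decomp (z : Fin n → ℂ) : ∃ (u : ℂ) (x y : Fin n → ℝ),
    ‖u‖ = 1 ∧ (∀ j, u * z j = (x j : ℂ) + (y j : ℂ) * I) ∧
    ∑ j, x j ^ 2 = (Nz z + Qz z) / 2 ∧ ∑ j, y j ^ 2 = (Nz z - Qz z) / 2 ∧
    ∑ j, x j * y j = 0 := by
  set c : ℂ := ∑ j, (z j) ^ 2 with hc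
  have hQc : Qz z = ‖c‖ := by rw [Qz, hc]
  have rot_aux : ∀ w : ℂ, Complex.exp ((-w.arg : ℝ) * I) * w = ((‖w‖ : ℝ) : ℂ) := by
    intro w
    have h := Complex.norm_mul_exp_arg_mul_I w
    calc Complex.exp ((-w.arg : ℝ) * I) * w
        = Complex.exp ((-w.arg : ℝ) * I) * (((‖w‖ : ℝ) : ℂ) * Complex.exp ((w.arg : ℝ) * I)) := by rw [h]
      _ = (Complex.exp ((-w.arg : ℝ) * I) * Complex.exp ((w.arg : ℝ) * I)) * ((‖w‖ : ℝ) : ℂ) := by ring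
      _ = ((‖w‖ : ℝ) : ℂ) := by
          rw [← Complex.exp_add]
          have h0 : ((-w.arg : ℝ) : ℂ) * I + ((w.arg : ℝ) : ℂ) * I = 0 := by push_cast; ring
          rw [h0, Complex.exp_zero, one_mul]
  obtain ⟨u, hu1, huc⟩ : ∃ u : ℂ, ‖u‖ = 1 ∧ u ^ 2 * c = ((Qz z : ℝ) : ℂ) := by
    refine ⟨Complex.exp ((-(c.arg / 2) : ℝ) * I), ?_, ?_⟩
    · rw [Complex.norm_exp]; simp
    · have h2 : (Complex.exp ((-(c.arg / 2) : ℝ) * I)) ^ 2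
          = Complex.exp ((-c.arg : ℝ) * I) := by
        rw [← Complex.exp_nat_mul]
        congr 1
        push_cast
        ring
      rw [h2, rot_aux c, hQc]
  refine ⟨u, fun j => (u * z j).re, fun j => (u * z j).im, hu1,
    fun j => (Complex.re_add_im (u * z j)).symm, ?_, ?_, ?_⟩
  all_goals {
    have hsum : ∑ j, (u * z j) ^ 2 = ((Qz z : ℝ) : ℂ) := by
      calc ∑ j, (u * z j) ^ 2 = ∑ j, u ^ 2 * (z j) ^ 2 := by
            exact Finset.sum_congr rfl fun j _ => by ring
        _ = u ^ 2 * c := by rw [← Finset.mul_sum, ← hc]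
        _ = ((Qz z : ℝ) : ℂ) := huc
    have hre : ∑ j, ((u * z j).re ^ 2 - (u * z j).im ^ 2) = Qz z := by
      calc ∑ j, ((u * z j).re ^ 2 - (u * z j).im ^ 2)
          = ∑ j, ((u * z j) ^ 2).re := by
            exact Finset.sum_congr rfl fun j _ => by simp only [pow_two, Complex.mul_re, Complex.mul_im]; try ring
        _ = (∑ j, (u * z j) ^ 2).re := (Complex.re_sum _ _).symm
        _ = Qz z := by rw [hsum, Complex.ofReal_re]
    have him : ∑ j, ((u * z j).re * (u * z j).im) * 2 = 0 := by
      calc ∑ j, ((u * z j).re * (u * z j).im) * 2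
          = ∑ j, ((u * z j) ^ 2).im := by
            exact Finset.sum_congr rfl fun j _ => by simp only [pow_two, Complex.mul_re, Complex.mul_im]; try ring
        _ = (∑ j, (u * z j) ^ 2).im := (Complex.im_sum _ _).symm
        _ = 0 := by rw [hsum, Complex.ofReal_im]
    have hN : ∑ j, ((u * z j).re ^ 2 + (u * z j).im ^ 2) = Nz z := by
      rw [Nz]
      refine Finset.sum_congr rfl fun j _ => ?_
      have h1 : (u * z j).re ^ 2 + (u * z j).im ^ 2 = ‖u * z j‖ ^ 2 := by
        rw [Complex.sq_norm, Complex.normSq_apply]; ring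
      rw [h1, norm_mul, hu1, one_mul]
    rw [Finset.sum_sub_distrib] at hre
    rw [Finset.sum_add_distrib] at hN
    rw [← Finset.sum_mul] at him
    beta_reduce
    linarith }

lemma cs (f g : Fin n → ℝ) :
    ∑ j, f j * g j ≤ Real.sqrt (∑ j, f j ^ 2) * Real.sqrt (∑ j, g j ^ 2) := by
  have h := Finset.sum_mul_sq_le_sq_mul_sq univ f g
  calc ∑ j, f j * g j ≤ |∑ j, f j * g j| := le_abs_self _
    _ = Real.sqrt ((∑ j, f j * g j) ^ 2) := (Real.sqrt_sq_eq_abs _).symm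
    _ ≤ Real.sqrt ((∑ j, f j ^ 2) * ∑ j, g j ^ 2) := Real.sqrt_le_sqrt h
    _ = _ := Real.sqrt_mul (Finset.sum_nonneg fun j _ => sq_nonneg _) _

lemma upper (z g : Fin n → ℂ)
    (hg : (∑ j, ‖g j‖ ^ 2) + ‖∑ j, (g j) ^ 2‖ ≤ 2) :
    (∑ j, z j * g j).re ≤ az z + bz z := by
  obtain ⟨u, x, y, hu1, huz, hx2, hy2, hxy⟩ := decomp z
  have hu : (starRingEnd ℂ) u * u = 1 := by
    rw [mul_comm, Complex.mul_conj]
    norm_cast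
    rw [← Complex.sq_norm, hu1]; norm_num
  set k : Fin n → ℂ := fun j => (starRingEnd ℂ) u * g j with hk
  have hzg : ∀ j, z j * g j = ((x j : ℂ) + (y j : ℂ) * I) * k j := by
    intro j
    rw [← huz j, hk]
    calc z j * g j = ((starRingEnd ℂ) u * u) * (z j * g j) := by rw [hu, one_mul]
      _ = (u * z j) * ((starRingEnd ℂ) u * g j) := by ring
  have hre : (∑ j, z j * g j).re = ∑ j, (x j * (k j).re - y j * (k j).im) := by
    rw [Complex.re_sum]
    refine Finset.sum_congr rfl fun j _ => ?_
    rw [hzg j, Complex.mul_re]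
    simp
  -- bounds on k
  have habs_k : ∀ j, ‖k j‖ = ‖g j‖ := by
    intro j
    rw [hk]
    simp [norm_mul, Complex.norm_conj, hu1]
  have hsum_abs : ∑ j, ((k j).re ^ 2 + (k j).im ^ 2) = ∑ j, ‖g j‖ ^ 2 := by
    refine Finset.sum_congr rfl fun j _ => ?_
    rw [← habs_k j, Complex.sq_norm, Complex.normSq_apply]; ring
  have hksq : ∑ j, (k j) ^ 2 = ((starRingEnd ℂ) u) ^ 2 * ∑ j, (g j) ^ 2 := by
    rw [Finset.mul_sum]
    exact Finset.sum_congr rfl fun j _ => by rw [hk]; ring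
  have hdiff : |∑ j, ((k j).re ^ 2 - (k j).im ^ 2)| ≤ ‖∑ j, (g j) ^ 2‖ := by
    have h1 : ∑ j, ((k j).re ^ 2 - (k j).im ^ 2) = (∑ j, (k j) ^ 2).re := by
      rw [Complex.re_sum]
      exact Finset.sum_congr rfl fun j _ =>
        by simp only [pow_two, Complex.mul_re]; try ring
    rw [h1]
    calc |(∑ j, (k j) ^ 2).re| ≤ ‖∑ j, (k j) ^ 2‖ := Complex.abs_re_le_norm _
      _ = ‖∑ j, (g j) ^ 2‖ := by
          rw [hksq, norm_mul, norm_pow, Complex.norm_conj, hu1]; norm_num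
  rw [Finset.sum_add_distrib] at hsum_abs
  rw [Finset.sum_sub_distrib] at hdiff
  rw [abs_le] at hdiff
  have hα : ∑ j, (k j).re ^ 2 ≤ 1 := by linarith [hdiff.2]
  have hβ : ∑ j, (k j).im ^ 2 ≤ 1 := by linarith [hdiff.1]
  -- Cauchy-Schwarz
  have hcs1 : ∑ j, x j * (k j).re ≤ az z := by
    calc ∑ j, x j * (k j).re
        ≤ Real.sqrt (∑ j, x j ^ 2) * Real.sqrt (∑ j, (k j).re ^ 2) := cs _ _
      _ ≤ Real.sqrt (∑ j, x j ^ 2) * 1 := by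
          exact mul_le_mul_of_nonneg_left (Real.sqrt_le_one.mpr hα) (Real.sqrt_nonneg _)
      _ = az z := by rw [mul_one, hx2, az]
  have hcs2 : ∑ j, y j * (-(k j).im) ≤ bz z := by
    calc ∑ j, y j * (-(k j).im)
        ≤ Real.sqrt (∑ j, y j ^ 2) * Real.sqrt (∑ j, (-(k j).im) ^ 2) := cs _ _
      _ = Real.sqrt (∑ j, y j ^ 2) * Real.sqrt (∑ j, (k j).im ^ 2) := by
          congr 1
          exact congrArg _ (Finset.sum_congr rfl fun j _ => by ring)
      _ ≤ Real.sqrt (∑ j, y j ^ 2) * 1 := by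
          exact mul_le_mul_of_nonneg_left (Real.sqrt_le_one.mpr hβ) (Real.sqrt_nonneg _)
      _ = bz z := by rw [mul_one, hy2, bz]
  have hsplit : ∑ j, (x j * (k j).re - y j * (k j).im)
      = ∑ j, x j * (k j).re + ∑ j, y j * (-(k j).im) := by
    rw [← Finset.sum_add_distrib]
    exact Finset.sum_congr rfl fun j _ => by ring
  rw [hre, hsplit]
  linarith

lemma witness (z : Fin n → ℂ) : ∃ g : Fin n → ℂ,
    ((∑ j, ‖g j‖ ^ 2) + ‖∑ j, (g j) ^ 2‖ ≤ 2) ∧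
    (∑ j, z j * g j).re = az z + bz z := by
  obtain ⟨u, x, y, hu1, huz, hx2, hy2, hxy⟩ := decomp z
  set X := Real.sqrt (∑ j, x j ^ 2) with hX
  set Y := Real.sqrt (∑ j, y j ^ 2) with hY
  have hXnn : (0:ℝ) ≤ X := Real.sqrt_nonneg _
  have hYnn : (0:ℝ) ≤ Y := Real.sqrt_nonneg _
  have hXsq : X ^ 2 = ∑ j, x j ^ 2 :=
    Real.sq_sqrt (Finset.sum_nonneg fun j _ => sq_nonneg _)
  have hYsq : Y ^ 2 = ∑ j, y j ^ 2 :=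
    Real.sq_sqrt (Finset.sum_nonneg fun j _ => sq_nonneg _)
  set x' : Fin n → ℝ := fun j => X⁻¹ * x j with hx'
  set y' : Fin n → ℝ := fun j => Y⁻¹ * y j with hy'
  -- basic facts about x', y'
  have hxx' : ∑ j, x j * x' j = X := by
    have h1 : ∑ j, x j * x' j = X⁻¹ * ∑ j, x j ^ 2 := by
      rw [Finset.mul_sum]
      exact Finset.sum_congr rfl fun j _ => by rw [hx']; ring
    rw [h1, ← hXsq]
    rcases eq_or_lt_of_le hXnn with h | h
    · rw [← h]; simp
    · field_simp
  have hyy' : ∑ j, y j * y' j = Y := by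
    have h1 : ∑ j, y j * y' j = Y⁻¹ * ∑ j, y j ^ 2 := by
      rw [Finset.mul_sum]
      exact Finset.sum_congr rfl fun j _ => by rw [hy']; ring
    rw [h1, ← hYsq]
    rcases eq_or_lt_of_le hYnn with h | h
    · rw [← h]; simp
    · field_simp
  have hP : ∑ j, x' j ^ 2 ≤ 1 := by
    have h1 : ∑ j, x' j ^ 2 = X⁻¹ ^ 2 * ∑ j, x j ^ 2 := by
      rw [Finset.mul_sum]
      exact Finset.sum_congr rfl fun j _ => by rw [hx']; ring
    rw [h1, ← hXsq]
    rcases eq_or_lt_of_le hXnn with h | h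
    · rw [← h]; norm_num
    · rw [inv_pow, inv_mul_cancel₀ (by positivity)]
  have hR : ∑ j, y' j ^ 2 ≤ 1 := by
    have h1 : ∑ j, y' j ^ 2 = Y⁻¹ ^ 2 * ∑ j, y j ^ 2 := by
      rw [Finset.mul_sum]
      exact Finset.sum_congr rfl fun j _ => by rw [hy']; ring
    rw [h1, ← hYsq]
    rcases eq_or_lt_of_le hYnn with h | h
    · rw [← h]; norm_num
    · rw [inv_pow, inv_mul_cancel₀ (by positivity)]
  have hPnn : (0:ℝ) ≤ ∑ j, x' j ^ 2 := Finset.sum_nonneg fun j _ => sq_nonneg _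
  have hRnn : (0:ℝ) ≤ ∑ j, y' j ^ 2 := Finset.sum_nonneg fun j _ => sq_nonneg _
  have hx'y' : ∑ j, x' j * y' j = 0 := by
    have h1 : ∑ j, x' j * y' j = X⁻¹ * Y⁻¹ * ∑ j, x j * y j := by
      rw [Finset.mul_sum]
      exact Finset.sum_congr rfl fun j _ => by rw [hx', hy']; ring
    rw [h1, hxy, mul_zero]
  -- the witness
  refine ⟨fun j => u * ((x' j : ℂ) - (y' j : ℂ) * I), ?_, ?_⟩
  · -- the dual-ball bound
    have habs : ∀ j, ‖u * ((x' j : ℂ) - (y' j : ℂ) * I)‖ ^ 2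
        = x' j ^ 2 + y' j ^ 2 := by
      intro j
      rw [norm_mul, hu1, one_mul, Complex.sq_norm, Complex.normSq_apply]
      simp
      ring
    have hsq : ∑ j, (u * ((x' j : ℂ) - (y' j : ℂ) * I)) ^ 2
        = u ^ 2 * (((∑ j, x' j ^ 2) - (∑ j, y' j ^ 2) : ℝ) : ℂ) := by
      have h1 : ∀ j, (u * ((x' j : ℂ) - (y' j : ℂ) * I)) ^ 2
          = u ^ 2 * (((x' j ^ 2 - y' j ^ 2 : ℝ) : ℂ) - ((2 * (x' j * y' j) : ℝ) : ℂ) * I) := by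
        intro j
        have hI : (I : ℂ) ^ 2 = -1 := Complex.I_sq
        push_cast
        ring_nf
        rw [Complex.I_sq]
        ring
      rw [Finset.sum_congr rfl fun j _ => h1 j, ← Finset.mul_sum]
      congr 1
      have h2 : ∑ j, (((x' j ^ 2 - y' j ^ 2 : ℝ) : ℂ) - ((2 * (x' j * y' j) : ℝ) : ℂ) * I)
          = (((∑ j, x' j ^ 2) - (∑ j, y' j ^ 2) : ℝ) : ℂ)
            - ((2 * ∑ j, x' j * y' j : ℝ) : ℂ) * I := by
        rw [Finset.sum_sub_distrib, ← Finset.sum_mul]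
        push_cast
        rw [Finset.sum_sub_distrib, Finset.mul_sum]
      rw [h2, hx'y']
      push_cast
      ring
    have habs_sum : ‖∑ j, (u * ((x' j : ℂ) - (y' j : ℂ) * I)) ^ 2‖
        = |(∑ j, x' j ^ 2) - (∑ j, y' j ^ 2)| := by
      rw [hsq, norm_mul, norm_pow, hu1, one_pow, one_mul, Complex.norm_real, Real.norm_eq_abs]
    rw [Finset.sum_congr rfl fun j _ => habs j, habs_sum, Finset.sum_add_distrib]
    rcases abs_cases ((∑ j, x' j ^ 2) - (∑ j, y' j ^ 2)) with ⟨h, _⟩ | ⟨h, _⟩ <;>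
      rw [h] <;> linarith
  · -- the pairing value
    have hzg : ∀ j, z j * (u * ((x' j : ℂ) - (y' j : ℂ) * I))
        = ((x j : ℂ) + (y j : ℂ) * I) * ((x' j : ℂ) - (y' j : ℂ) * I) := by
      intro j
      rw [← huz j]
      ring
    have hterm : ∀ j, (((x j : ℂ) + (y j : ℂ) * I) * ((x' j : ℂ) - (y' j : ℂ) * I)).re
        = x j * x' j + y j * y' j := by
      intro j
      rw [Complex.mul_re]
      simp
      try ring
    rw [Complex.re_sum]
    rw [Finset.sum_congr rfl fun j _ => by rw [hzg j, hterm j]]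
    rw [Finset.sum_add_distrib, hxx', hyy', hX, hY, hx2, hy2, az, bz]

lemma mem_iff (z : Fin n → ℂ) :
    (Real.sqrt (∑ j, ‖z j‖ ^ 2) < 1 ∧
     2 * ∑ j, ‖z j‖ ^ 2 < 1 + ‖∑ j, (z j) ^ 2‖ ^ 2)
    ↔ az z + bz z < 1 := by
  have hA0 := Nz_nonneg z
  have hQ0 := Qz_nonneg z
  have hQA := Qz_le_Nz z
  have ha2 := az_sq z
  have hb2 := bz_sq z
  have ha0 := az_nonneg z
  have hb0 := bz_nonneg z
  have hNz : ∑ j, ‖z j‖ ^ 2 = Nz z := rfl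
  have hQz : ‖∑ j, (z j) ^ 2‖ = Qz z := rfl
  rw [hNz, hQz, Real.sqrt_lt' one_pos, one_pow]
  constructor
  · rintro ⟨h1, h2⟩
    nlinarith [sq_nonneg (az z + bz z - 1), sq_nonneg (az z * bz z),
      mul_nonneg ha0 hb0, sq_nonneg (az z - bz z)]
  · intro h
    have hab : az z * bz z ≥ 0 := mul_nonneg ha0 hb0
    constructor
    · nlinarith
    · have hc2 : (az z + bz z) ^ 2 < 1 := by nlinarith
      have hd2 : (az z - bz z) ^ 2 ≤ (az z + bz z) ^ 2 := by nlinarith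
      have key : (1 - (az z + bz z) ^ 2) * (1 - (az z - bz z) ^ 2) > 0 :=
        mul_pos (by linarith) (by linarith)
      have hQ : Qz z = az z ^ 2 - bz z ^ 2 := by linarith
      have hQQ : Qz z ^ 2 = (az z + bz z) ^ 2 * (az z - bz z) ^ 2 := by rw [hQ]; ring
      have hN : 2 * Nz z = (az z + bz z) ^ 2 + (az z - bz z) ^ 2 := by
        linear_combination -2 * ha2 - 2 * hb2
      nlinarith [key]

end LieBall

open LieBall in
/-- The Lie ball `Lₙ` is a convex subset of `ℂⁿ`. -/
theorem stmt_6 (n : ℕ) :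
    Convex ℝ {z : Fin n → ℂ |
      Real.sqrt (∑ j, ‖z j‖ ^ 2) < 1 ∧
      2 * ∑ j, ‖z j‖ ^ 2 < 1 + ‖∑ j, (z j) ^ 2‖ ^ 2} := by
  intro z₁ hz₁ z₂ hz₂ t s ht hs hts
  rw [Set.mem_setOf_eq] at hz₁ hz₂
  rw [Set.mem_setOf_eq, mem_iff]
  rw [mem_iff] at hz₁ hz₂
  obtain ⟨g, hg2, hgre⟩ := witness (t • z₁ + s • z₂)
  have h1 := upper z₁ g hg2
  have h2 := upper z₂ g hg2
  have hlin : (∑ j, (t • z₁ + s • z₂) j * g j).re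
      = t * (∑ j, z₁ j * g j).re + s * (∑ j, z₂ j * g j).re := by
    have hterm : ∀ j, (t • z₁ + s • z₂) j * g j
        = (t : ℂ) * (z₁ j * g j) + (s : ℂ) * (z₂ j * g j) := by
      intro j
      simp only [Pi.add_apply, Pi.smul_apply, Complex.real_smul]
      ring
    rw [Finset.sum_congr rfl fun j _ => hterm j, Finset.sum_add_distrib,
      ← Finset.mul_sum, ← Finset.mul_sum, Complex.add_re]
    simp [Complex.re_ofReal_mul]
  rw [← hgre, hlin]
  rcases eq_or_lt_of_le ht with h | h
  · rw [← h] at hts ⊢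
    simp only [zero_add] at hts
    subst hts
    simp only [zero_mul, zero_add, one_mul]
    linarith
  · nlinarith [mul_le_mul_of_nonneg_left h1 (le_of_lt h),
      mul_le_mul_of_nonneg_left h2 hs,
      mul_lt_mul_of_pos_left hz₁ h,
      mul_le_mul_of_nonneg_left (le_of_lt hz₂) hs]
end

section
/- The Bergman kernel of the domain 𝕃ₙ vanishes at some pair of points for all n ≥ 3: concretely, with z₀ = (ω − 1)/(ω + 1) where ω = exp(iπ/n), one has 1/(1 − z₀)^{2n} − 1/(1 + z₀)^{2n} = 0. -/
open Complex Real

/-- With `z₀ = (ω−1)/(ω+1)` for `ω = exp(iπ/n)`, `n ≥ 3`, the Bergman-kernel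
expression `1/(1−z₀)^{2n} − 1/(1+z₀)^{2n}` vanishes. -/
theorem stmt_14 (n : ℕ) (hn : 3 ≤ n) :
    ((1 - (Complex.exp (Real.pi * I / n) - 1) / (Complex.exp (Real.pi * I / n) + 1)) ^ (2 * n))⁻¹
      - ((1 + (Complex.exp (Real.pi * I / n) - 1) / (Complex.exp (Real.pi * I / n) + 1)) ^ (2 * n))⁻¹
      = 0 := by
  have hn0 : (n : ℂ) ≠ 0 := Nat.cast_ne_zero.mpr (by omega)
  set w := Complex.exp (Real.pi * I / n) with hw
  have hpow : w ^ (2 * n) = 1 := by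
    rw [hw, ← Complex.exp_nat_mul]
    have : (↑(2 * n) : ℂ) * (Real.pi * I / n) = 2 * Real.pi * I := by
      push_cast; field_simp
    rw [this, Complex.exp_two_pi_mul_I]
  have hne : w + 1 ≠ 0 := by
    intro h
    have hw1 : w = -1 := by linear_combination h
    have : w ^ (2 * n) = 1 := hpow
    -- instead use arg: w = exp(iθ) with θ = π/n ∈ (0, π/3]
    have harg : w.arg = Real.pi / n := by
      rw [hw]
      have : (↑Real.pi * I / ↑n : ℂ) = (↑(Real.pi / n) : ℝ) * I := by
        push_cast; field_simp
      rw [this, Complex.exp_mul_I, Complex.arg_cos_add_sin_mul_I]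
      constructor
      · have : (0:ℝ) < Real.pi / n := by
          apply div_pos Real.pi_pos
          exact_mod_cast Nat.pos_of_ne_zero (by omega)
        linarith [Real.pi_pos]
      · have h3 : (3:ℝ) ≤ n := by exact_mod_cast hn
        have : Real.pi / n ≤ Real.pi / 3 := by
          apply div_le_div_of_nonneg_left Real.pi_pos.le (by norm_num) h3
        linarith [Real.pi_pos]
    rw [hw1] at harg
    rw [Complex.arg_neg_one] at harg
    have h3 : (3:ℝ) ≤ n := by exact_mod_cast hn
    have : Real.pi / n ≤ Real.pi / 3 :=
      div_le_div_of_nonneg_left Real.pi_pos.le (by norm_num) h3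
    linarith [Real.pi_pos]
  have h1 : 1 - (w - 1) / (w + 1) = 2 / (w + 1) := by field_simp; ring
  have h2 : 1 + (w - 1) / (w + 1) = 2 * w / (w + 1) := by field_simp; ring
  rw [h1, h2, div_pow, div_pow, mul_pow, hpow, mul_one, sub_self]
end

section
/- If z = (z₁, …, zₙ) ∈ Lₙ (the Lie ball), then the truncation (z₁, …, zₘ) ∈ Lₘ for every m < n. -/
open Complex Finset

/-- Key real inequality. -/
lemma key_ineq (a b x y : ℝ) (hx : 0 ≤ x) (hxa : x ≤ a) (hb : 0 ≤ b) (hy : 0 ≤ y)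
    (hy' : y ≤ x + b) (hab : a + b < 1) (h : 2 * (a + b) < 1 + y ^ 2) :
    2 * a < 1 + x ^ 2 := by
  nlinarith [sq_nonneg (x + b - y), sq_nonneg y, mul_nonneg hb hx]

/-- If `z ∈ Lₙ` then every truncation `(z₁,…,zₘ)`, `m < n`, lies in `Lₘ`. -/
theorem stmt_17 (n : ℕ) (z : Fin n → ℂ)
    (hz : Real.sqrt (∑ j, ‖z j‖ ^ 2) < 1 ∧
      2 * ∑ j, ‖z j‖ ^ 2 < 1 + ‖∑ j, (z j) ^ 2‖ ^ 2)
    (m : ℕ) (hm : m < n) :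
    Real.sqrt (∑ j : Fin m, ‖z (Fin.castLE hm.le j)‖ ^ 2) < 1 ∧
      2 * ∑ j : Fin m, ‖z (Fin.castLE hm.le j)‖ ^ 2 <
        1 + ‖∑ j : Fin m, (z (Fin.castLE hm.le j)) ^ 2‖ ^ 2 := by
  obtain ⟨h1, h2⟩ := hz
  set E : Finset (Fin n) := Finset.univ.map (Fin.castLEEmb hm.le) with hE
  have hsum1 : ∑ j : Fin m, ‖z (Fin.castLE hm.le j)‖ ^ 2
      = ∑ j ∈ E, ‖z j‖ ^ 2 := by
    rw [hE, Finset.sum_map]; rfl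
  have hsum2 : ∑ j : Fin m, (z (Fin.castLE hm.le j)) ^ 2 = ∑ j ∈ E, (z j) ^ 2 := by
    rw [hE, Finset.sum_map]; rfl
  set a : ℝ := ∑ j ∈ E, ‖z j‖ ^ 2 with ha
  set b : ℝ := ∑ j ∈ Eᶜ, ‖z j‖ ^ 2 with hb
  set s : ℂ := ∑ j ∈ E, (z j) ^ 2 with hs
  set t : ℂ := ∑ j ∈ Eᶜ, (z j) ^ 2 with ht
  have hsplitR : (∑ j, ‖z j‖ ^ 2) = a + b := by
    rw [ha, hb, Finset.sum_add_sum_compl]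
  have hsplitC : (∑ j, (z j) ^ 2) = s + t := by
    rw [hs, ht, Finset.sum_add_sum_compl]
  have ha0 : 0 ≤ a := Finset.sum_nonneg fun j _ => sq_nonneg _
  have hb0 : 0 ≤ b := Finset.sum_nonneg fun j _ => sq_nonneg _
  have hsa : ‖s‖ ≤ a := by
    refine le_trans (norm_sum_le _ _) ?_
    simp [map_pow, ha]
  have htb : ‖t‖ ≤ b := by
    refine le_trans (norm_sum_le _ _) ?_
    simp [map_pow, hb]
  have hab1 : a + b < 1 := by
    rw [← hsplitR]
    have h0 : (0:ℝ) ≤ ∑ j, ‖z j‖ ^ 2 :=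
      Finset.sum_nonneg fun j _ => sq_nonneg _
    nlinarith [Real.sq_sqrt h0, Real.sqrt_nonneg (∑ j, ‖z j‖ ^ 2)]
  rw [hsplitR, hsplitC] at h2
  have hst : ‖s + t‖ ≤ ‖s‖ + b :=
    le_trans (norm_add_le _ _) (by linarith)
  have hy2 : ‖s + t‖ ^ 2 ≤ (‖s‖ + b) ^ 2 := by
    apply pow_le_pow_left₀ (norm_nonneg _) hst
  have hkey : 2 * a < 1 + ‖s‖ ^ 2 :=
    key_ineq a b (‖s‖) (‖s+t‖) (norm_nonneg _) hsa hb0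
      (norm_nonneg _) hst hab1 (by nlinarith)
  constructor
  · rw [hsum1]
    exact (Real.sqrt_lt' one_pos).mpr (by nlinarith)
  · rw [hsum1, hsum2]; exact hkey
end
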